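/- Let H and K be simplicial complexes with H < K (H is a minor of K). Then there exists an injective chain map C_•(H; Z/2) → C_•(K; Z/2). -/
import Mathlib


open Finset

variable {V : Type*} [DecidableEq V]

/-- A (finite) simplicial complex, given by its finite family of faces:
closed under subsets and containing the empty set.  The vertices of `K` are
exactly the elements `v` with `{v} ∈ K`. -/
def IsComplex (K : Finset (Finset V)) : Prop :=
  ∅ ∈ K ∧ ∀ S ∈ K, ∀ T ⊆ S, T ∈ K

/-- The dimension of `K` : the maximum of `|F| - 1` over the faces `F` of `K`. -/
def dimC (K : Finset (Finset V)) : ℤ :=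
  ((K.sup Finset.card : ℕ) : ℤ) - 1

/-- `T` is a missing face of `K` : a set of vertices of `K` which is not a face of `K`
while all its proper subsets are faces of `K`. -/
def IsMissingFace (K : Finset (Finset V)) (T : Finset V) : Prop :=
  (∀ x ∈ T, ({x} : Finset V) ∈ K) ∧ T ∉ K ∧ ∀ S ⊂ T, S ∈ K

/-- The contraction of `u` onto `v` is admissible if no missing face of `K` of
dimension `≤ dim K` contains both `u` and `v`. -/
def Admissible (K : Finset (Finset V)) (u v : V) : Prop :=
  ∀ T : Finset V, IsMissingFace K T → (T.card : ℤ) - 1 ≤ dimC K → ¬(u ∈ T ∧ v ∈ T)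

/-- The contraction of `u` onto `v`:
`K' = {T ∈ K : u ∉ T} ∪ {(T \ {u}) ∪ {v} : u ∈ T ∈ K}`. -/
def contractC (K : Finset (Finset V)) (u v : V) : Finset (Finset V) :=
  K.filter (fun T => u ∉ T) ∪ (K.filter (fun T => u ∈ T)).image (fun T => insert v (T.erase u))

/-- The link of a face: `lk(S,K) = {T ∈ K : T ∩ S = ∅ ∧ T ∪ S ∈ K}`. -/
def linkC (K : Finset (Finset V)) (S : Finset V) : Finset (Finset V) :=
  K.filter (fun T => T ∩ S = ∅ ∧ T ∪ S ∈ K)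

/-- The `m`-skeleton: all faces of dimension at most `m`. -/
def skelC (K : Finset (Finset V)) (m : ℤ) : Finset (Finset V) :=
  K.filter (fun F => (F.card : ℤ) - 1 ≤ m)

/-- The faces of `K` of dimension `n`, i.e. of cardinality `n + 1`. -/
def facesOfDim (K : Finset (Finset V)) (n : ℕ) : Finset (Finset V) :=
  K.filter (fun F => F.card = n + 1)

/-- `C_n(K; ℤ/2)`: the `ℤ/2`-vector space with basis the `n`-dimensional faces of `K`,
realized as the space of `ℤ/2`-valued functions on the `n`-dimensional faces. -/
abbrev Chains (K : Finset (Finset V)) (n : ℕ) : Type _ :=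
  {F : Finset V // F ∈ facesOfDim K n} → ZMod 2

/-- The boundary map `∂ : C_{n+1}(K;ℤ/2) → C_n(K;ℤ/2)`, determined on a basis face `F`
by `∂F = Σ_{x ∈ F} (F \ {x})`.  (The coefficient of `G` in `∂F` is `1` iff `G ⊆ F`,
as `G` and `F` are faces with `|F| = |G| + 1`.) -/
def bdry (K : Finset (Finset V)) (n : ℕ) (c : Chains K (n + 1)) : Chains K n :=
  fun G => ∑ F ∈ (facesOfDim K (n + 1)).attach, if G.1 ⊆ F.1 then c F else 0

/-- One step in forming a minor: either a deletion (passing to a subcomplex)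
or an admissible contraction of a vertex `u` onto a vertex `v`. -/
def MinorStep (K K' : Finset (Finset V)) : Prop :=
  (K' ⊆ K ∧ IsComplex K') ∨ ∃ u v : V, u ≠ v ∧ ({u} : Finset V) ∈ K ∧ ({v} : Finset V) ∈ K ∧
    Admissible K u v ∧ K' = contractC K u v

/-- `H` is a minor of `K` (`H < K`): `H` is obtained from `K` by a finite sequence of
admissible contractions and deletions. -/
def IsMinor (H K : Finset (Finset V)) : Prop :=
  Relation.ReflTransGen (fun A B => MinorStep A B) K H

def extChain (L : Finset (Finset V)) (n : ℕ) (c : Chains L n) : Finset V → ZMod 2 :=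
  fun F => if h : F ∈ facesOfDim L n then c ⟨F, h⟩ else 0

lemma extChain_mem (L : Finset (Finset V)) (n : ℕ) (c : Chains L n)
    (F : {F // F ∈ facesOfDim L n}) : extChain L n c F.1 = c F := by
  simp [extChain, F.2]

lemma extChain_add (L : Finset (Finset V)) (n : ℕ) (c d : Chains L n) :
    extChain L n (c + d) = extChain L n c + extChain L n d := by
  funext F
  by_cases h : F ∈ facesOfDim L n <;> simp [extChain, h]

lemma extChain_smul (L : Finset (Finset V)) (n : ℕ) (a : ZMod 2) (c : Chains L n) :
    extChain L n (a • c) = a • extChain L n c := by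
  funext F
  by_cases h : F ∈ facesOfDim L n <;> simp [extChain, h]

lemma bdry_eq (K : Finset (Finset V)) (n : ℕ) (c : Chains K (n+1))
    (G : {F // F ∈ facesOfDim K n}) :
    bdry K n c G = ∑ F ∈ facesOfDim K (n+1),
      if G.1 ⊆ F then extChain K (n+1) c F else 0 := by
  rw [bdry, ← Finset.sum_attach (facesOfDim K (n+1))
    (fun F => if G.1 ⊆ F then extChain K (n+1) c F else 0)]
  exact Finset.sum_congr rfl fun F _ => by rw [extChain_mem]

def mapOf (H K : Finset (Finset V)) (M : Finset V → Finset V → ZMod 2) (n : ℕ) :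
    Chains H n →ₗ[ZMod 2] Chains K n where
  toFun c := fun F => ∑ T ∈ facesOfDim H n, M F.1 T * extChain H n c T
  map_add' c d := by
    funext F
    simp only [extChain_add, Pi.add_apply, mul_add, Finset.sum_add_distrib]
  map_smul' a c := by
    funext F
    simp only [extChain_smul, Pi.smul_apply, RingHom.id_apply, smul_eq_mul,
      Finset.mul_sum]
    exact Finset.sum_congr rfl fun T _ => by ring

lemma mapOf_comm (H K : Finset (Finset V)) (M : Finset V → Finset V → ZMod 2)
    (hcond : ∀ (n : ℕ) (G : Finset V), G ∈ facesOfDim K n → ∀ T ∈ facesOfDim H (n+1),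
      (∑ F ∈ facesOfDim K (n+1), if G ⊆ F then M F T else 0)
        = ∑ T' ∈ facesOfDim H n, if T' ⊆ T then M G T' else 0) :
    ∀ (n : ℕ) (c : Chains H (n+1)),
      bdry K n (mapOf H K M (n+1) c) = mapOf H K M n (bdry H n c) := by
  intro n c
  funext G
  rw [bdry_eq]
  have hL : (∑ F ∈ facesOfDim K (n+1),
        if G.1 ⊆ F then extChain K (n+1) (mapOf H K M (n+1) c) F else 0)
      = ∑ T ∈ facesOfDim H (n+1),
          (∑ F ∈ facesOfDim K (n+1), if G.1 ⊆ F then M F T else 0)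
            * extChain H (n+1) c T := by
    have h1 : ∀ F ∈ facesOfDim K (n+1),
        (if G.1 ⊆ F then extChain K (n+1) (mapOf H K M (n+1) c) F else 0)
          = ∑ T ∈ facesOfDim H (n+1),
              if G.1 ⊆ F then M F T * extChain H (n+1) c T else 0 := by
      intro F hF
      have : extChain K (n+1) (mapOf H K M (n+1) c) F
          = ∑ T ∈ facesOfDim H (n+1), M F T * extChain H (n+1) c T := by
        rw [show F = (⟨F, hF⟩ : {F // F ∈ facesOfDim K (n+1)}).1 from rfl, extChain_mem]
        rfl
      rw [this]
      split <;> simp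
    rw [Finset.sum_congr rfl h1, Finset.sum_comm]
    exact Finset.sum_congr rfl fun T _ => by
      rw [Finset.sum_mul]
      exact Finset.sum_congr rfl fun F _ => by split <;> simp
  rw [hL]
  have h2 : ∀ T' ∈ facesOfDim H n,
      extChain H n (bdry H n c) T'
        = ∑ T ∈ facesOfDim H (n+1), if T' ⊆ T then extChain H (n+1) c T else 0 := by
    intro T' hT'
    rw [show T' = (⟨T', hT'⟩ : {F // F ∈ facesOfDim H n}).1 from rfl, extChain_mem,
      bdry_eq]
  show _ = ∑ T' ∈ facesOfDim H n, M G.1 T' * extChain H n (bdry H n c) T'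
  calc ∑ T ∈ facesOfDim H (n+1),
          (∑ F ∈ facesOfDim K (n+1), if G.1 ⊆ F then M F T else 0)
            * extChain H (n+1) c T
      = ∑ T ∈ facesOfDim H (n+1),
          (∑ T' ∈ facesOfDim H n, if T' ⊆ T then M G.1 T' else 0)
            * extChain H (n+1) c T :=
        Finset.sum_congr rfl fun T hT => by rw [hcond n G.1 G.2 T hT]
    _ = ∑ T ∈ facesOfDim H (n+1), ∑ T' ∈ facesOfDim H n,
          (if T' ⊆ T then M G.1 T' * extChain H (n+1) c T else 0) :=
        Finset.sum_congr rfl fun T hT => by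
          rw [Finset.sum_mul]
          exact Finset.sum_congr rfl fun T' _ => by split <;> simp
    _ = ∑ T' ∈ facesOfDim H n, ∑ T ∈ facesOfDim H (n+1),
          (if T' ⊆ T then M G.1 T' * extChain H (n+1) c T else 0) := Finset.sum_comm
    _ = ∑ T' ∈ facesOfDim H n, M G.1 T' * extChain H n (bdry H n c) T' := by
        refine Finset.sum_congr rfl fun T' hT' => ?_
        rw [h2 T' hT', Finset.mul_sum]
        exact Finset.sum_congr rfl fun T _ => by split <;> simp

lemma facesOfDim_subset {H K : Finset (Finset V)} (h : H ⊆ K) (n : ℕ) :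
    facesOfDim H n ⊆ facesOfDim K n := Finset.filter_subset_filter _ h

lemma mem_facesOfDim {K : Finset (Finset V)} {n : ℕ} {F : Finset V} :
    F ∈ facesOfDim K n ↔ F ∈ K ∧ F.card = n + 1 := Finset.mem_filter

lemma deletion_step (K K' : Finset (Finset V)) (hsub : K' ⊆ K) (hK' : IsComplex K') :
    ∃ ψ : ∀ n : ℕ, Chains K' n →ₗ[ZMod 2] Chains K n,
      (∀ n, Function.Injective (ψ n)) ∧
      ∀ (n : ℕ) (c : Chains K' (n+1)), bdry K n (ψ (n+1) c) = ψ n (bdry K' n c) := by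
  refine ⟨fun n => mapOf K' K (fun F T => if F = T then 1 else 0) n, ?_, ?_⟩
  · intro n c d hcd
    funext T
    have hm : T.1 ∈ facesOfDim K n := facesOfDim_subset hsub n T.2
    have key : ∀ e : Chains K' n,
        mapOf K' K (fun F T => if F = T then 1 else 0) n e ⟨T.1, hm⟩ = e T := by
      intro e
      show (∑ T' ∈ facesOfDim K' n, (if T.1 = T' then (1:ZMod 2) else 0) * extChain K' n e T') = e T
      rw [Finset.sum_congr rfl (fun T' _ => by rw [ite_mul, one_mul, zero_mul]),
        Finset.sum_ite_eq, if_pos T.2, extChain_mem]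
    have := congrFun hcd ⟨T.1, hm⟩
    rwa [key, key] at this
  · refine mapOf_comm K' K _ ?_
    intro n G hG T hT
    have hTK : T ∈ facesOfDim K (n+1) := facesOfDim_subset hsub (n+1) hT
    have hL : (∑ F ∈ facesOfDim K (n+1),
        if G ⊆ F then (if F = T then (1:ZMod 2) else 0) else 0)
        = if G ⊆ T then 1 else 0 := by
      rw [Finset.sum_congr rfl (fun F _ => show _ = if F = T then (if G ⊆ F then (1:ZMod 2) else 0) else 0 by
        by_cases h1 : F = T
        · subst h1; simp
        · simp [h1]), Finset.sum_ite_eq', if_pos hTK]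
    have hR : (∑ T' ∈ facesOfDim K' n,
        if T' ⊆ T then (if G = T' then (1:ZMod 2) else 0) else 0)
        = if G ∈ facesOfDim K' n then (if G ⊆ T then 1 else 0) else 0 := by
      rw [Finset.sum_congr rfl (fun T' _ => show _ = if T' = G then (if T' ⊆ T then (1:ZMod 2) else 0) else 0 by
        by_cases h1 : T' = G
        · subst h1; simp
        · have h2 : G ≠ T' := fun h => h1 h.symm
          simp [h1, h2]), Finset.sum_ite_eq']
    rw [hL, hR]
    by_cases hG' : G ∈ facesOfDim K' n
    · rw [if_pos hG']
    · rw [if_neg hG']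
      have : ¬ G ⊆ T := by
        intro hGT
        exact hG' (mem_facesOfDim.2 ⟨hK'.2 T (mem_facesOfDim.1 hT).1 G hGT,
          (mem_facesOfDim.1 hG).2⟩)
      rw [if_neg this]
section contraction

variable {K : Finset (Finset V)} {u v : V}

lemma mem_contract {T : Finset V} :
    T ∈ contractC K u v ↔ (T ∈ K ∧ u ∉ T) ∨ ∃ R, R ∈ K ∧ u ∈ R ∧ T = insert v (R.erase u) := by
  simp only [contractC, Finset.mem_union, Finset.mem_filter, Finset.mem_image]
  constructor
  · rintro (h | ⟨R, ⟨hR, hu⟩, rfl⟩)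
    · exact Or.inl h
    · exact Or.inr ⟨R, hR, hu, rfl⟩
  · rintro (h | ⟨R, hR, hu, rfl⟩)
    · exact Or.inl h
    · exact Or.inr ⟨R, ⟨hR, hu⟩, rfl⟩

lemma notMem_of_contract (huv : u ≠ v) {T : Finset V} (hT : T ∈ contractC K u v) :
    u ∉ T := by
  rcases mem_contract.1 hT with ⟨_, h⟩ | ⟨R, _, _, rfl⟩
  · exact h
  · simp [Finset.mem_insert, huv, Finset.mem_erase]

lemma card_le_of_contract (huv : u ≠ v) {T : Finset V} (hT : T ∈ contractC K u v) :
    T.card ≤ K.sup Finset.card := by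
  rcases mem_contract.1 hT with ⟨h, _⟩ | ⟨R, hR, hu, rfl⟩
  · exact Finset.le_sup h
  · have h1 := Finset.card_insert_le v (R.erase u)
    have h2 := Finset.card_erase_of_mem hu
    have h3 := Finset.card_pos.2 ⟨u, hu⟩
    have h4 : R.card ≤ K.sup Finset.card := Finset.le_sup hR
    omega

lemma contract_complex (hK : IsComplex K) (huv : u ≠ v) :
    IsComplex (contractC K u v) := by
  constructor
  · exact mem_contract.2 (Or.inl ⟨hK.1, by simp⟩)
  · intro S hS T hTS
    have huT : u ∉ T := fun h => notMem_of_contract huv hS (hTS h)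
    rcases mem_contract.1 hS with ⟨h, _⟩ | ⟨R, hR, hu, rfl⟩
    · exact mem_contract.2 (Or.inl ⟨hK.2 S h T hTS, huT⟩)
    · by_cases hv : v ∈ T
      · refine mem_contract.2 (Or.inr ⟨insert u (T.erase v), ?_, by simp, ?_⟩)
        · refine hK.2 R hR _ ?_
          intro x hx
          rcases Finset.mem_insert.1 hx with rfl | hx2
          · exact hu
          · have h1 := Finset.mem_erase.1 hx2
            have h2 : x ∈ insert v (R.erase u) := hTS h1.2
            rcases Finset.mem_insert.1 h2 with rfl | h3
            · exact (h1.1 rfl).elim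
            · exact Finset.mem_of_mem_erase h3
        · rw [Finset.erase_insert_eq_erase,
            Finset.erase_eq_of_notMem (fun h => huT (Finset.mem_of_mem_erase h)),
            Finset.insert_erase hv]
      · refine mem_contract.2 (Or.inl ⟨hK.2 R hR T ?_, huT⟩)
        intro x hx
        have h2 : x ∈ insert v (R.erase u) := hTS hx
        rcases Finset.mem_insert.1 h2 with rfl | h3
        · exact (hv hx).elim
        · exact Finset.mem_of_mem_erase h3

/-- The key structural lemma for faces of the contraction that are not faces of `K`. -/
lemma contract_key (hK : IsComplex K) (huv : u ≠ v) (hadm : Admissible K u v)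
    {T : Finset V} (hT : T ∈ contractC K u v) (hTK : T ∉ K) :
    v ∈ T ∧ u ∉ T ∧ insert u (T.erase v) ∈ K ∧
      ∀ x ∈ T, T.erase x ∈ K → insert u (T.erase x) ∈ K := by
  rcases mem_contract.1 hT with ⟨h, _⟩ | ⟨R, hR, hu, rfl⟩
  · exact absurd h hTK
  set T := insert v (R.erase u) with hTdef
  have huT : u ∉ T := notMem_of_contract huv hT
  have hvT : v ∈ T := Finset.mem_insert_self _ _
  have hSsub : insert u (T.erase v) ⊆ R := by
    intro x hx
    rcases Finset.mem_insert.1 hx with rfl | hx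
    · exact hu
    · have h1 := Finset.mem_erase.1 hx
      rcases Finset.mem_insert.1 h1.2 with rfl | h2
      · exact (h1.1 rfl).elim
      · exact Finset.mem_of_mem_erase h2
  have hS : insert u (T.erase v) ∈ K := hK.2 R hR _ hSsub
  refine ⟨hvT, huT, hS, ?_⟩
  intro x hx hxK
  by_cases hxv : x = v
  · subst hxv; exact hS
  -- x ≠ v : use admissibility
  by_contra hW
  set W := insert u (T.erase x) with hWdef
  -- find a minimal non-face M ⊆ W
  obtain ⟨M, hMmem, hMmin⟩ := Finset.exists_min_image
    ((W.powerset).filter (fun S => S ∉ K)) Finset.card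
    ⟨W, Finset.mem_filter.2 ⟨Finset.mem_powerset_self W, hW⟩⟩
  have hMW : M ⊆ W := Finset.mem_powerset.1 (Finset.mem_filter.1 hMmem).1
  have hMK : M ∉ K := (Finset.mem_filter.1 hMmem).2
  have hmin : ∀ S ⊂ M, S ∈ K := by
    intro S hSM
    by_contra hSK
    have := hMmin S (Finset.mem_filter.2 ⟨Finset.mem_powerset.2 (hSM.1.trans hMW), hSK⟩)
    have := Finset.card_lt_card hSM
    omega
  have huM : u ∈ M := by
    by_contra huM
    refine hMK (hK.2 (T.erase x) hxK M ?_)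
    intro y hy
    rcases Finset.mem_insert.1 (hMW hy) with rfl | h
    · exact (huM hy).elim
    · exact h
  have hvM : v ∈ M := by
    by_contra hvM
    refine hMK (hK.2 (insert u (T.erase v)) hS M ?_)
    intro y hy
    rcases Finset.mem_insert.1 (hMW hy) with rfl | h
    · exact Finset.mem_insert_self _ _
    · refine Finset.mem_insert_of_mem (Finset.mem_erase.2 ⟨?_, Finset.mem_of_mem_erase h⟩)
      rintro rfl
      exact hvM hy
  have hMissing : IsMissingFace K M := by
    refine ⟨?_, hMK, hmin⟩
    intro y hy
    rcases Finset.mem_insert.1 (hMW hy) with rfl | h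
    · refine hK.2 R hR {y} ?_
      simp [Finset.singleton_subset_iff, hu]
    · refine hK.2 (T.erase x) hxK {y} ?_
      simp [Finset.singleton_subset_iff, h]
  have hdim : (M.card : ℤ) - 1 ≤ dimC K := by
    have h1 : M.card ≤ W.card := Finset.card_le_card hMW
    have h2 : W.card ≤ (T.erase x).card + 1 := Finset.card_insert_le _ _
    have h3 : (T.erase x).card = T.card - 1 := Finset.card_erase_of_mem hx
    have h4 : T.card ≤ K.sup Finset.card := card_le_of_contract huv hT
    have h5 : 1 ≤ T.card := Finset.card_pos.2 ⟨v, hvT⟩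
    unfold dimC
    omega
  exact hadm M hMissing hdim ⟨huM, hvM⟩

end contraction

lemma erase_inj_of_mem {T : Finset V} {x y : V} (hx : x ∈ T) (hy : y ∈ T)
    (h : T.erase x = T.erase y) : x = y := by
  by_contra hne
  have : x ∈ T.erase y := Finset.mem_erase.2 ⟨hne, hx⟩
  rw [← h] at this
  exact (Finset.mem_erase.1 this).1 rfl

/-- counting lemma: `∑_{y ∈ T} [G = T.erase y] = [G ⊆ T]` when `|G| + 1 = |T|`. -/
lemma erase_count {G T : Finset V} (hcard : G.card + 1 = T.card) :
    (∑ y ∈ T, if G = T.erase y then (1 : ZMod 2) else 0) = if G ⊆ T then 1 else 0 := by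
  by_cases hsub : G ⊆ T
  · rw [if_pos hsub]
    have hss : G ⊂ T := lt_of_le_of_ne hsub (by intro h; rw [h] at hcard; omega)
    obtain ⟨y, hyT, hyG⟩ := Finset.exists_of_ssubset hss
    have hGy : G = T.erase y := by
      refine Finset.eq_of_subset_of_card_le (Finset.subset_erase.2 ⟨hsub, hyG⟩) ?_
      rw [Finset.card_erase_of_mem hyT]; omega
    rw [Finset.sum_eq_single y]
    · rw [if_pos hGy]
    · intro b hb hby
      rw [if_neg]
      intro hGb
      have : T.erase b = T.erase y := by rw [← hGb, hGy]
      exact hby (erase_inj_of_mem hb hyT this)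
    · intro hy; exact (hy hyT).elim
  · rw [if_neg hsub]
    refine Finset.sum_eq_zero fun y hy => ?_
    rw [if_neg]
    intro hGy
    exact hsub (hGy ▸ Finset.erase_subset _ _)

/-- The matrix of the chain map associated to an admissible contraction. -/
def Mc (K : Finset (Finset V)) (u : V) (F T : Finset V) : ZMod 2 :=
  if T ∈ K then (if F = T then 1 else 0)
  else ∑ x ∈ T, (if T.erase x ∈ K ∧ F = insert u (T.erase x) then 1 else 0)

section contractioncond

variable {K : Finset (Finset V)} {u v : V}

lemma contract_cond (hK : IsComplex K) (huv : u ≠ v) (hadm : Admissible K u v) :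
    ∀ (n : ℕ) (G : Finset V), G ∈ facesOfDim K n →
      ∀ T ∈ facesOfDim (contractC K u v) (n+1),
      (∑ F ∈ facesOfDim K (n+1), if G ⊆ F then Mc K u F T else 0)
        = ∑ T' ∈ facesOfDim (contractC K u v) n, if T' ⊆ T then Mc K u G T' else 0 := by
  intro n G hG T hT
  set K' := contractC K u v with hK'def
  have hK' : IsComplex K' := contract_complex hK huv
  obtain ⟨hGK, hGcard⟩ := mem_facesOfDim.1 hG
  obtain ⟨hTK', hTcard⟩ := mem_facesOfDim.1 hT
  -- reindex the RHS as a sum over elements of T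
  have hRHS : (∑ T' ∈ facesOfDim K' n, if T' ⊆ T then Mc K u G T' else 0)
      = ∑ y ∈ T, Mc K u G (T.erase y) := by
    rw [← Finset.sum_filter]
    refine (Finset.sum_bij (fun (y : V) (hy : y ∈ T) => T.erase y) ?_ ?_ ?_ ?_).symm
    · intro y hy
      refine Finset.mem_filter.2 ⟨mem_facesOfDim.2 ⟨hK'.2 T hTK' _ (Finset.erase_subset _ _), ?_⟩,
        Finset.erase_subset _ _⟩
      rw [Finset.card_erase_of_mem hy, hTcard]
      omega
    · intro y hy z hz h
      exact erase_inj_of_mem hy hz h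
    · intro T' hT'
      obtain ⟨hT'f, hT'T⟩ := Finset.mem_filter.1 hT'
      obtain ⟨hT'K', hT'card⟩ := mem_facesOfDim.1 hT'f
      have hss : T' ⊂ T := lt_of_le_of_ne hT'T (by intro h; rw [h] at hT'card; omega)
      obtain ⟨y, hyT, hyT'⟩ := Finset.exists_of_ssubset hss
      refine ⟨y, hyT, ?_⟩
      refine (Finset.eq_of_subset_of_card_le (Finset.subset_erase.2 ⟨hT'T, hyT'⟩) ?_).symm
      rw [Finset.card_erase_of_mem hyT, hTcard, hT'card]
      omega
    · intro y hy; rfl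
  rw [hRHS]
  have huT : u ∉ T := notMem_of_contract huv hTK'
  by_cases hTK : T ∈ K
  -- Case T ∈ K
  · have hL : (∑ F ∈ facesOfDim K (n+1), if G ⊆ F then Mc K u F T else 0)
        = if G ⊆ T then 1 else 0 := by
      have hTf : T ∈ facesOfDim K (n+1) := mem_facesOfDim.2 ⟨hTK, hTcard⟩
      rw [Finset.sum_congr rfl (fun F _ => show _ = if F = T then (if G ⊆ F then (1:ZMod 2) else 0) else 0 by
        by_cases h1 : F = T
        · subst h1; simp [Mc, hTK]
        · simp [Mc, hTK, h1]), Finset.sum_ite_eq', if_pos hTf]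
    rw [hL, ← erase_count (by omega : G.card + 1 = T.card)]
    refine Finset.sum_congr rfl fun y hy => ?_
    have hyK : T.erase y ∈ K := hK.2 T hTK _ (Finset.erase_subset _ _)
    simp only [Mc, if_pos hyK]
  -- Case T ∉ K
  · obtain ⟨hvT, -, hSK, hkey⟩ := contract_key hK huv hadm hTK' hTK
    -- LHS as a sum over elements of T
    have hL : (∑ F ∈ facesOfDim K (n+1), if G ⊆ F then Mc K u F T else 0)
        = ∑ x ∈ T, (if T.erase x ∈ K ∧ G ⊆ insert u (T.erase x) then (1:ZMod 2) else 0) := by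
      have e1 : ∀ F ∈ facesOfDim K (n+1), (if G ⊆ F then Mc K u F T else 0)
          = ∑ x ∈ T, (if G ⊆ F then (if T.erase x ∈ K ∧ F = insert u (T.erase x) then (1:ZMod 2) else 0) else 0) := by
        intro F _
        rw [Mc, if_neg hTK]
        split <;> simp
      rw [Finset.sum_congr rfl e1, Finset.sum_comm]
      refine Finset.sum_congr rfl fun x hx => ?_
      by_cases hxK : T.erase x ∈ K
      · have hFx : insert u (T.erase x) ∈ facesOfDim K (n+1) := by
          refine mem_facesOfDim.2 ⟨hkey x hx hxK, ?_⟩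
          rw [Finset.card_insert_of_notMem (fun h => huT (Finset.mem_of_mem_erase h)),
            Finset.card_erase_of_mem hx, hTcard]
          omega
        rw [Finset.sum_congr rfl (fun F _ => show _ = if F = insert u (T.erase x) then (if G ⊆ F then (1:ZMod 2) else 0) else 0 by
          by_cases h1 : F = insert u (T.erase x)
          · subst h1; simp [hxK]
          · simp [h1]), Finset.sum_ite_eq', if_pos hFx]
        simp [hxK]
      · simp [hxK]
    rw [hL]
    by_cases huG : u ∉ G
    -- Subcase u ∉ G
    · have e2 : ∀ x ∈ T, (if T.erase x ∈ K ∧ G ⊆ insert u (T.erase x) then (1:ZMod 2) else 0)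
          = if G = T.erase x then 1 else 0 := by
        intro x hx
        have hGsub : G ⊆ insert u (T.erase x) ↔ G = T.erase x := by
          constructor
          · intro h
            have h2 : G ⊆ T.erase x := fun g hg => by
              rcases Finset.mem_insert.1 (h hg) with rfl | h3
              · exact (huG hg).elim
              · exact h3
            refine Finset.eq_of_subset_of_card_le h2 ?_
            rw [Finset.card_erase_of_mem hx, hTcard, hGcard]
            omega
          · rintro rfl
            exact Finset.subset_insert _ _
        by_cases h1 : G = T.erase x
        · rw [if_pos h1, if_pos ⟨h1 ▸ hGK, hGsub.2 h1⟩]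
        · rw [if_neg h1, if_neg (fun h => h1 (hGsub.1 h.2))]
      rw [Finset.sum_congr rfl e2, erase_count (by omega : G.card + 1 = T.card)]
      rw [← erase_count (by omega : G.card + 1 = T.card)]
      refine Finset.sum_congr rfl fun y hy => ?_
      by_cases hyK : T.erase y ∈ K
      · simp only [Mc, if_pos hyK]
      · rw [Mc, if_neg hyK]
        have hz : (∑ x ∈ T.erase y, if (T.erase y).erase x ∈ K ∧ G = insert u ((T.erase y).erase x) then (1:ZMod 2) else 0) = 0 := by
          refine Finset.sum_eq_zero fun x hx => ?_
          rw [if_neg]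
          rintro ⟨-, hGx⟩
          exact huG (hGx ▸ Finset.mem_insert_self u _)
        rw [hz, if_neg (fun h => hyK (by rw [← h]; exact hGK))]
    -- Subcase u ∈ G
    · push_neg at huG
      set E := G.erase u with hEdef
      have hGE : G = insert u E := (Finset.insert_erase huG).symm
      have huE : u ∉ E := Finset.notMem_erase _ _
      have hEK : E ∈ K := hK.2 G hGK E (Finset.erase_subset _ _)
      have hEcard : E.card + 1 = G.card := Finset.card_erase_add_one huG
      have hGne : ∀ W : Finset V, W ⊆ T → G ≠ W := by
        intro W hW h
        exact huT (hW (h ▸ huG))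
      have hGiff : ∀ W : Finset V, (G ⊆ insert u W ↔ E ⊆ W) := by
        intro W
        constructor
        · intro h e he
          rcases Finset.mem_insert.1 (h (Finset.mem_of_mem_erase he)) with rfl | h2
          · exact (huE he).elim
          · exact h2
        · intro h
          rw [hGE]
          exact Finset.insert_subset_insert _ h
      have hGeq : ∀ W : Finset V, u ∉ W → (G = insert u W ↔ W = E) := by
        intro W hW
        constructor
        · intro h
          rw [hEdef, h, Finset.erase_insert_eq_erase, Finset.erase_eq_of_notMem hW]
        · rintro rfl; exact hGE
      by_cases hE : E ⊆ T
      · -- the two elements of T \ E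
        have hTE2 : (T \ E).card = 2 := by
          rw [Finset.card_sdiff_of_subset hE]; omega
        obtain ⟨a, b, hab, hTEab⟩ := Finset.card_eq_two.1 hTE2
        have hamem : a ∈ T \ E := hTEab ▸ Finset.mem_insert_self a {b}
        have haT : a ∈ T := (Finset.mem_sdiff.1 hamem).1
        have haE : a ∉ E := (Finset.mem_sdiff.1 hamem).2
        have hbmem : b ∈ T \ E := hTEab ▸ Finset.mem_insert_of_mem (Finset.mem_singleton_self b)
        have hbT : b ∈ T := (Finset.mem_sdiff.1 hbmem).1
        have hbE : b ∉ E := (Finset.mem_sdiff.1 hbmem).2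
        have hmemTE : ∀ x, x ∈ T → (x ∉ E ↔ x = a ∨ x = b) := by
          intro x hx
          constructor
          · intro hxE
            have : x ∈ T \ E := Finset.mem_sdiff.2 ⟨hx, hxE⟩
            rw [hTEab] at this
            simpa using this
          · rintro (rfl | rfl) <;> assumption
        -- LHS = [T.erase a ∈ K] + [T.erase b ∈ K]
        have e3 : ∀ x ∈ T, (if T.erase x ∈ K ∧ G ⊆ insert u (T.erase x) then (1:ZMod 2) else 0)
            = (if x = a then (if T.erase a ∈ K then 1 else 0) else 0)
              + (if x = b then (if T.erase b ∈ K then 1 else 0) else 0) := by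
          intro x hx
          have hsubiff : G ⊆ insert u (T.erase x) ↔ x ∉ E := by
            rw [hGiff, Finset.subset_erase]
            constructor
            · exact fun h => h.2
            · exact fun h => ⟨hE, h⟩
          by_cases h1 : x = a
          · subst h1
            rw [if_pos rfl, if_neg hab, add_zero]
            by_cases h2 : T.erase x ∈ K
            · rw [if_pos ⟨h2, hsubiff.2 ((hmemTE x hx).2 (Or.inl rfl))⟩, if_pos h2]
            · rw [if_neg (fun h => h2 h.1), if_neg h2]
          · by_cases h2 : x = b
            · subst h2
              rw [if_neg h1, if_pos rfl, zero_add]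
              by_cases h3 : T.erase x ∈ K
              · rw [if_pos ⟨h3, hsubiff.2 ((hmemTE x hx).2 (Or.inr rfl))⟩, if_pos h3]
              · rw [if_neg (fun h => h3 h.1), if_neg h3]
            · rw [if_neg h1, if_neg h2, add_zero, if_neg]
              rintro ⟨-, hsub⟩
              rcases (hmemTE x hx).1 (hsubiff.1 hsub) with rfl | rfl
              · exact h1 rfl
              · exact h2 rfl
        -- RHS = [T.erase a ∉ K] + [T.erase b ∉ K]
        have mc_ab : ∀ y z : V, y ∈ T → z ∈ T → y ≠ z → T \ E = {y, z} →
            Mc K u G (T.erase y) = if T.erase y ∈ K then 0 else 1 := by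
          intro y z hyT hzT hyz hTEyz
          have hyE : y ∉ E := (Finset.mem_sdiff.1 (hTEyz ▸ Finset.mem_insert_self y {z})).2
          have hzE : z ∉ E := (Finset.mem_sdiff.1 (hTEyz ▸
            Finset.mem_insert_of_mem (Finset.mem_singleton_self z))).2
          by_cases hyK : T.erase y ∈ K
          · rw [Mc, if_pos hyK, if_neg (hGne _ (Finset.erase_subset _ _)), if_pos hyK]
          · rw [Mc, if_neg hyK, if_neg hyK]
            have hzy : z ∈ T.erase y := Finset.mem_erase.2 ⟨fun h => hyz h.symm, hzT⟩
            have hEyz : (T.erase y).erase z = E := by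
              ext w
              simp only [Finset.mem_erase]
              constructor
              · rintro ⟨hwz, hwy, hwT⟩
                by_contra hwE
                have : w ∈ T \ E := Finset.mem_sdiff.2 ⟨hwT, hwE⟩
                rw [hTEyz] at this
                rcases Finset.mem_insert.1 this with rfl | h
                · exact hwy rfl
                · exact hwz (Finset.mem_singleton.1 h)
              · intro hwE
                exact ⟨fun h => hzE (h ▸ hwE), fun h => hyE (h ▸ hwE), hE hwE⟩
            rw [Finset.sum_eq_single z]
            · rw [hEyz, if_pos ⟨hEK, hGE⟩]
            · intro x hx hxz
              rw [if_neg]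
              rintro ⟨-, hGx⟩
              have hux : u ∉ (T.erase y).erase x :=
                fun h => huT (Finset.mem_of_mem_erase (Finset.mem_of_mem_erase h))
              have hxE : (T.erase y).erase x = E := (hGeq _ hux).1 hGx
              exact hxz (erase_inj_of_mem hx hzy (hxE.trans hEyz.symm))
            · intro h; exact (h hzy).elim
        have mc_zero : ∀ y ∈ T, y ∈ E → Mc K u G (T.erase y) = 0 := by
          intro y hyT hyE
          by_cases hyK : T.erase y ∈ K
          · rw [Mc, if_pos hyK, if_neg (hGne _ (Finset.erase_subset _ _))]
          · rw [Mc, if_neg hyK]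
            refine Finset.sum_eq_zero fun x hx => ?_
            rw [if_neg]
            rintro ⟨-, hGx⟩
            have hux : u ∉ (T.erase y).erase x :=
              fun h => huT (Finset.mem_of_mem_erase (Finset.mem_of_mem_erase h))
            have hxE : (T.erase y).erase x = E := (hGeq _ hux).1 hGx
            have : y ∈ (T.erase y).erase x := hxE ▸ hyE
            exact (Finset.mem_erase.1 (Finset.mem_of_mem_erase this)).1 rfl
        have e4 : ∀ y ∈ T, Mc K u G (T.erase y)
            = (if y = a then (if T.erase a ∈ K then 0 else 1) else 0)
              + (if y = b then (if T.erase b ∈ K then 0 else 1) else 0) := by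
          intro y hy
          by_cases h1 : y = a
          · subst h1
            rw [if_pos rfl, if_neg hab, add_zero]
            exact mc_ab y b hy hbT hab hTEab
          · by_cases h2 : y = b
            · subst h2
              rw [if_neg h1, if_pos rfl, zero_add]
              refine mc_ab y a hy haT (fun h => h1 h) ?_
              rw [hTEab, Finset.pair_comm]
            · rw [if_neg h1, if_neg h2, add_zero]
              refine mc_zero y hy ?_
              by_contra hyE
              rcases (hmemTE y hy).1 hyE with rfl | rfl
              · exact h1 rfl
              · exact h2 rfl
        rw [Finset.sum_congr rfl e3, Finset.sum_congr rfl e4,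
          Finset.sum_add_distrib, Finset.sum_add_distrib,
          Finset.sum_ite_eq' T a, Finset.sum_ite_eq' T b,
          Finset.sum_ite_eq' T a, Finset.sum_ite_eq' T b]
        by_cases hKa : T.erase a ∈ K <;> by_cases hKb : T.erase b ∈ K <;>
          simp [haT, hbT, hKa, hKb] <;> decide
      · -- E not contained in T : both sides vanish
        have hLz : (∑ x ∈ T, (if T.erase x ∈ K ∧ G ⊆ insert u (T.erase x) then (1:ZMod 2) else 0)) = 0 := by
          refine Finset.sum_eq_zero fun x hx => ?_
          rw [if_neg]
          rintro ⟨-, hsub⟩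
          exact hE (((hGiff _).1 hsub).trans (Finset.erase_subset _ _))
        have hRz : (∑ y ∈ T, Mc K u G (T.erase y)) = 0 := by
          refine Finset.sum_eq_zero fun y hy => ?_
          by_cases hyK : T.erase y ∈ K
          · rw [Mc, if_pos hyK, if_neg (hGne _ (Finset.erase_subset _ _))]
          · rw [Mc, if_neg hyK]
            refine Finset.sum_eq_zero fun x hx => ?_
            rw [if_neg]
            rintro ⟨-, hGx⟩
            have hux : u ∉ (T.erase y).erase x :=
              fun h => huT (Finset.mem_of_mem_erase (Finset.mem_of_mem_erase h))
            have hxE : (T.erase y).erase x = E := (hGeq _ hux).1 hGx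
            refine hE ?_
            rw [← hxE]
            exact ((Finset.erase_subset _ _).trans (Finset.erase_subset _ _))
        rw [hLz, hRz]

end contractioncond

section contractinj

variable {K : Finset (Finset V)} {u v : V}

lemma contract_inj (hK : IsComplex K) (huv : u ≠ v) (hadm : Admissible K u v) (n : ℕ) :
    Function.Injective (mapOf (contractC K u v) K (Mc K u) n) := by
  intro c d hcd
  have hK' : IsComplex (contractC K u v) := contract_complex hK huv
  funext T
  obtain ⟨hTK', hTcard⟩ := mem_facesOfDim.1 T.2
  by_cases hTK : T.1 ∈ K
  · have hm : T.1 ∈ facesOfDim K n := mem_facesOfDim.2 ⟨hTK, hTcard⟩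
    have key : ∀ e : Chains (contractC K u v) n,
        mapOf (contractC K u v) K (Mc K u) n e ⟨T.1, hm⟩ = e T := by
      intro e
      show (∑ T' ∈ facesOfDim (contractC K u v) n, Mc K u T.1 T' * extChain _ n e T') = e T
      rw [Finset.sum_eq_single T.1]
      · rw [Mc, if_pos hTK, if_pos rfl, one_mul, extChain_mem _ _ _ T]
      · intro b hb hbne
        obtain ⟨hbK', hbcard⟩ := mem_facesOfDim.1 hb
        have huT1 : u ∉ T.1 := notMem_of_contract huv hTK'
        by_cases hbK : b ∈ K
        · rw [Mc, if_pos hbK, if_neg (fun h => hbne h.symm), zero_mul]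
        · rw [Mc, if_neg hbK]
          have hz : (∑ x ∈ b, if b.erase x ∈ K ∧ T.1 = insert u (b.erase x) then (1:ZMod 2) else 0) = 0 := by
            refine Finset.sum_eq_zero fun x hx => ?_
            rw [if_neg]
            rintro ⟨-, h⟩
            exact huT1 (h ▸ Finset.mem_insert_self u _)
          rw [hz, zero_mul]
      · intro h; exact (h T.2).elim
    have := congrFun hcd ⟨T.1, hm⟩
    rwa [key c, key d] at this
  · obtain ⟨hvT, huT, hSK, hkey⟩ := contract_key hK huv hadm hTK' hTK
    have huTe : u ∉ T.1.erase v := fun h => huT (Finset.mem_of_mem_erase h)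
    have hScard : (insert u (T.1.erase v)).card = n + 1 := by
      rw [Finset.card_insert_of_notMem huTe, Finset.card_erase_of_mem hvT, hTcard]
      omega
    have hm : insert u (T.1.erase v) ∈ facesOfDim K n := mem_facesOfDim.2 ⟨hSK, hScard⟩
    have hSe : (insert u (T.1.erase v)).erase u = T.1.erase v := by
      rw [Finset.erase_insert_eq_erase, Finset.erase_eq_of_notMem huTe]
    have key : ∀ e : Chains (contractC K u v) n,
        mapOf (contractC K u v) K (Mc K u) n e ⟨insert u (T.1.erase v), hm⟩ = e T := by
      intro e
      show (∑ T' ∈ facesOfDim (contractC K u v) n,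
        Mc K u (insert u (T.1.erase v)) T' * extChain _ n e T') = e T
      rw [Finset.sum_eq_single T.1]
      · rw [Mc, if_neg hTK]
        have hone : (∑ x ∈ T.1, if T.1.erase x ∈ K ∧ insert u (T.1.erase v) = insert u (T.1.erase x)
            then (1:ZMod 2) else 0) = 1 := by
          rw [Finset.sum_eq_single v]
          · rw [if_pos ⟨hK.2 _ hSK _ (Finset.subset_insert _ _), rfl⟩]
          · intro x hx hxv
            rw [if_neg]
            rintro ⟨-, hxS⟩
            have h1 : T.1.erase v = T.1.erase x := by
              have := congrArg (fun W => Finset.erase W u) hxS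
              simpa only [hSe, Finset.erase_insert_eq_erase,
                Finset.erase_eq_of_notMem (fun h => huT (Finset.mem_of_mem_erase h))] using this
            exact hxv (erase_inj_of_mem hvT hx h1).symm
          · intro h; exact (h hvT).elim
        rw [hone, one_mul, extChain_mem _ _ _ T]
      · intro b hb hbne
        obtain ⟨hbK', hbcard⟩ := mem_facesOfDim.1 hb
        have hub : u ∉ b := notMem_of_contract huv hbK'
        by_cases hbK : b ∈ K
        · rw [Mc, if_pos hbK, if_neg (fun h => hub (by rw [← h]; exact Finset.mem_insert_self u _)), zero_mul]
        · obtain ⟨hvb, -, -, -⟩ := contract_key hK huv hadm hbK' hbK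
          rw [Mc, if_neg hbK]
          have hz : (∑ x ∈ b, if b.erase x ∈ K ∧ insert u (T.1.erase v) = insert u (b.erase x)
              then (1:ZMod 2) else 0) = 0 := by
            refine Finset.sum_eq_zero fun x hx => ?_
            rw [if_neg]
            rintro ⟨-, hxS⟩
            have hux : u ∉ b.erase x := fun h => hub (Finset.mem_of_mem_erase h)
            have h1 : T.1.erase v = b.erase x := by
              have := congrArg (fun W => Finset.erase W u) hxS
              simpa only [hSe, Finset.erase_insert_eq_erase,
                Finset.erase_eq_of_notMem hux] using this
            by_cases hxv : x = v
            · subst hxv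
              refine hbne ?_
              rw [← Finset.insert_erase hvb, ← h1, Finset.insert_erase hvT]
            · have : v ∈ b.erase x := Finset.mem_erase.2 ⟨fun h => hxv h.symm, hvb⟩
              rw [← h1] at this
              exact (Finset.mem_erase.1 this).1 rfl
          rw [hz, zero_mul]
      · intro h; exact (h T.2).elim
    have := congrFun hcd ⟨insert u (T.1.erase v), hm⟩
    rwa [key c, key d] at this

end contractinj

lemma step_exists (K K' : Finset (Finset V)) (hK : IsComplex K) (h : MinorStep K K') :
    IsComplex K' ∧ ∃ ψ : ∀ n : ℕ, Chains K' n →ₗ[ZMod 2] Chains K n,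
      (∀ n, Function.Injective (ψ n)) ∧
      ∀ (n : ℕ) (c : Chains K' (n+1)), bdry K n (ψ (n+1) c) = ψ n (bdry K' n c) := by
  rcases h with ⟨hsub, hKc'⟩ | ⟨u, v, huv, hu, hv, hadm, rfl⟩
  · exact ⟨hKc', deletion_step K K' hsub hKc'⟩
  · refine ⟨contract_complex hK huv, ⟨fun n => mapOf _ K (Mc K u) n, contract_inj hK huv hadm,
      mapOf_comm _ _ _ (contract_cond hK huv hadm)⟩⟩


/-- If `H < K` (i.e. `H` is a minor of `K`), then there exists an
injective chain map `C_•(H;ℤ/2) → C_•(K;ℤ/2)`. -/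
theorem minor_gives_injective_chain_map
    (H K : Finset (Finset V)) (hH : IsComplex H) (hK : IsComplex K)
    (h : IsMinor H K) :
    ∃ φ : ∀ n : ℕ, Chains H n →ₗ[ZMod 2] Chains K n,
      (∀ n : ℕ, Function.Injective (φ n)) ∧
      ∀ (n : ℕ) (c : Chains H (n + 1)), bdry K n (φ (n + 1) c) = φ n (bdry H n c) := by
  have main : ∀ (A : Finset (Finset V)),
      Relation.ReflTransGen (fun X Y => MinorStep X Y) A H → IsComplex A →
      ∃ φ : ∀ n : ℕ, Chains H n →ₗ[ZMod 2] Chains A n,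
        (∀ n : ℕ, Function.Injective (φ n)) ∧
        ∀ (n : ℕ) (c : Chains H (n + 1)), bdry A n (φ (n + 1) c) = φ n (bdry H n c) := by
    intro A hA
    induction hA using Relation.ReflTransGen.head_induction_on with
    | refl =>
      intro _
      exact ⟨fun n => LinearMap.id, fun n a b hab => hab, fun n c => rfl⟩
    | @head A' B hstep htail ih =>
      intro hAc
      obtain ⟨hBc, ψ, hψinj, hψcomm⟩ := step_exists A' B hAc hstep
      obtain ⟨φ, hφinj, hφcomm⟩ := ih hBc
      refine ⟨fun n => (ψ n).comp (φ n), fun n => (hψinj n).comp (hφinj n), ?_⟩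
      intro n c
      show bdry A' n (ψ (n+1) (φ (n+1) c)) = ψ n (φ n (bdry H n c))
      rw [hψcomm n (φ (n+1) c), hφcomm n c]
  exact main K h hK
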